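/- If X and Y are locally compact Hausdorff spaces such that the C*-algebras C₀(X, ℂ) and C₀(Y, ℂ) are *-isomorphic (as star-algebras), then X and Y are homeomorphic. -/

import Mathlib

open scoped ZeroAtInfty

open OnePoint Filter Unitization WeakDual WeakDual.CharacterSpace

section Aux

variable (X : Type*) [TopologicalSpace X] [LocallyCompactSpace X] [T2Space X]

/-- The canonical embedding of `C₀(X, ℂ)` into `C(OnePoint X, ℂ)` by extending with `0`
at infinity. -/
noncomputable def myMu : C₀(X, ℂ) →⋆ₙₐ[ℂ] C(OnePoint X, ℂ) where
  toFun f := OnePoint.continuousMapMk f.toContinuousMap 0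
    (by simpa [Filter.coclosedCompact_eq_cocompact] using zero_at_infty f)
  map_smul' c f := by
    ext p
    induction p using OnePoint.rec <;> simp [continuousMapMk]
  map_zero' := by
    ext p
    induction p using OnePoint.rec <;> simp [continuousMapMk]
  map_add' f g := by
    ext p
    induction p using OnePoint.rec <;> simp [continuousMapMk]
  map_mul' f g := by
    ext p
    induction p using OnePoint.rec <;> simp [continuousMapMk]
  map_star' f := by
    ext p
    induction p using OnePoint.rec <;> simp [continuousMapMk]

@[simp] lemma myMu_apply_coe (f : C₀(X, ℂ)) (x : X) : myMu X f x = f x := rfl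

@[simp] lemma myMu_apply_infty (f : C₀(X, ℂ)) : myMu X f ∞ = 0 := rfl

/-- The lift of `myMu` to the unitization. -/
noncomputable def myLift : Unitization ℂ C₀(X, ℂ) →⋆ₐ[ℂ] C(OnePoint X, ℂ) :=
  Unitization.starLift (myMu X)

lemma myLift_apply (u : Unitization ℂ C₀(X, ℂ)) :
    myLift X u = algebraMap ℂ C(OnePoint X, ℂ) u.fst + myMu X u.snd := by
  rfl

@[simp] lemma myLift_apply_infty (u : Unitization ℂ C₀(X, ℂ)) :
    myLift X u ∞ = u.fst := by
  rw [myLift_apply]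
  simp

lemma myLift_apply_coe (u : Unitization ℂ C₀(X, ℂ)) (x : X) :
    myLift X u x = u.fst + u.snd x := by
  rw [myLift_apply]
  simp

lemma myLift_bijective : Function.Bijective (myLift X) := by
  constructor
  · intro u v huv
    have hinfty : u.fst = v.fst := by
      have := congrArg (fun g : C(OnePoint X, ℂ) => g ∞) huv
      simpa using this
    refine Unitization.ext hinfty ?_
    ext x
    have := congrArg (fun g : C(OnePoint X, ℂ) => g x) huv
    simp only [myLift_apply_coe, hinfty] at this ⊢
    exact add_left_cancel this
  · intro g
    have hcont : Continuous fun x : X => g x - g ∞ :=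
      (g.continuous.comp OnePoint.continuous_coe).sub continuous_const
    have htend : Tendsto (fun x : X => g x - g ∞) (cocompact X) (nhds 0) := by
      have h1 : Tendsto (fun x : X => g x) (cocompact X) (nhds (g ∞)) := by
        rw [← Filter.coclosedCompact_eq_cocompact]
        exact g.continuous.tendsto ∞ |>.comp OnePoint.tendsto_coe_infty
      simpa using h1.sub (tendsto_const_nhds (x := g ∞))
    let f : C₀(X, ℂ) := ⟨⟨fun x => g x - g ∞, hcont⟩, by simpa using htend⟩
    refine ⟨algebraMap ℂ _ (g ∞) + Unitization.inr f, ?_⟩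
    ext p
    induction p using OnePoint.rec with
    | infty => simp [Unitization.algebraMap_eq_inl]
    | coe x =>
      rw [myLift_apply_coe]
      simp [f, Unitization.algebraMap_eq_inl]

/-- The star-algebra isomorphism `Unitization ℂ C₀(X, ℂ) ≃⋆ₐ[ℂ] C(OnePoint X, ℂ)`. -/
noncomputable def myEquiv : Unitization ℂ C₀(X, ℂ) ≃⋆ₐ[ℂ] C(OnePoint X, ℂ) :=
  StarAlgEquiv.ofBijective (myLift X) (myLift_bijective X)

@[simp] lemma myEquiv_apply_infty (u : Unitization ℂ C₀(X, ℂ)) :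
    myEquiv X u ∞ = u.fst :=
  myLift_apply_infty X u

lemma myEquiv_symm_fst (g : C(OnePoint X, ℂ)) : ((myEquiv X).symm g).fst = g ∞ := by
  conv_rhs => rw [← (myEquiv X).apply_symm_apply g]
  rw [myEquiv_apply_infty]

end Aux

/-- A homeomorphism of one-point compactifications fixing `∞` restricts to a homeomorphism. -/
noncomputable def myRestrict {X Y : Type*} [TopologicalSpace X] [TopologicalSpace Y]
    (h : OnePoint X ≃ₜ OnePoint Y) (hinfty : h ∞ = ∞) : X ≃ₜ Y := by
  have hX : X ≃ₜ ({∞}ᶜ : Set (OnePoint X)) :=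
    (OnePoint.isOpenEmbedding_coe.isEmbedding.toHomeomorph).trans
      (Homeomorph.setCongr OnePoint.compl_infty.symm)
  have hY : Y ≃ₜ ({∞}ᶜ : Set (OnePoint Y)) :=
    (OnePoint.isOpenEmbedding_coe.isEmbedding.toHomeomorph).trans
      (Homeomorph.setCongr OnePoint.compl_infty.symm)
  have himg : h '' ({∞}ᶜ : Set (OnePoint X)) = ({∞}ᶜ : Set (OnePoint Y)) := by
    rw [Set.image_compl_eq h.bijective, Set.image_singleton, hinfty]
  exact hX.trans ((h.image _).trans ((Homeomorph.setCongr himg).trans hY.symm))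

/-- If `X` and `Y` are locally compact Hausdorff spaces with `C₀(X, ℂ)` and `C₀(Y, ℂ)`
*-isomorphic as star-algebras, then `X` and `Y` are homeomorphic. -/
theorem stmt_3 (X Y : Type*) [TopologicalSpace X] [LocallyCompactSpace X] [T2Space X]
    [TopologicalSpace Y] [LocallyCompactSpace Y] [T2Space Y]
    (h : Nonempty (C₀(X, ℂ) ≃⋆ₐ[ℂ] C₀(Y, ℂ))) :
    Nonempty (X ≃ₜ Y) := by
  obtain ⟨ψ⟩ := h
  -- lift `ψ` to an isomorphism of the unitizations
  let ψ' : C₀(X, ℂ) →⋆ₙₐ[ℂ] C₀(Y, ℂ) := ψ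
  let u : Unitization ℂ C₀(X, ℂ) ≃⋆ₐ[ℂ] Unitization ℂ C₀(Y, ℂ) :=
    StarAlgEquiv.ofBijective (Unitization.starMap ψ')
      ⟨Unitization.starMap_injective (ψ.injective), Unitization.starMap_surjective (ψ.surjective)⟩
  -- the induced isomorphism of `C(OnePoint X, ℂ)` and `C(OnePoint Y, ℂ)`
  let Φ : C(OnePoint X, ℂ) ≃⋆ₐ[ℂ] C(OnePoint Y, ℂ) :=
    ((myEquiv X).symm.trans u).trans (myEquiv Y)
  have hΦsymm_infty : ∀ g : C(OnePoint Y, ℂ), Φ.symm g ∞ = g ∞ := by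
    intro g
    show (myEquiv X) (u.symm ((myEquiv Y).symm g)) ∞ = g ∞
    rw [myEquiv_apply_infty]
    have hfst : ∀ v, (u v).fst = v.fst := by
      intro v
      show (Unitization.starMap ψ' v).fst = v.fst
      induction v using Unitization.ind with
      | inl_add_inr r a => simp [Unitization.algebraMap_eq_inl]
    have h1 : (u.symm ((myEquiv Y).symm g)).fst = ((myEquiv Y).symm g).fst := by
      rw [← hfst, u.apply_symm_apply]
    rw [h1, myEquiv_symm_fst]
  -- induced homeomorphism of character spaces
  let cX := homeoEval (OnePoint X) ℂ
  let cY := homeoEval (OnePoint Y) ℂ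
  let χ : characterSpace ℂ C(OnePoint X, ℂ) ≃ₜ characterSpace ℂ C(OnePoint Y, ℂ) :=
    { toFun := compContinuousMap (Φ.symm : C(OnePoint Y, ℂ) →⋆ₐ[ℂ] C(OnePoint X, ℂ))
      invFun := compContinuousMap (Φ : C(OnePoint X, ℂ) →⋆ₐ[ℂ] C(OnePoint Y, ℂ))
      left_inv := fun φ => by
        ext f
        simp
      right_inv := fun φ => by
        ext f
        simp
      continuous_toFun := (compContinuousMap _).continuous
      continuous_invFun := (compContinuousMap _).continuous }
  let h1 : OnePoint X ≃ₜ OnePoint Y := (cX.trans χ).trans cY.symm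
  have hinfty : h1 ∞ = ∞ := by
    have key : χ (cX ∞) = cY ∞ := by
      ext g
      show (cX ∞) ((Φ.symm : C(OnePoint Y, ℂ) →⋆ₐ[ℂ] C(OnePoint X, ℂ)) g) = (cY ∞) g
      simp only [cX, cY, homeoEval, Continuous.homeoOfEquivCompactToT2]
      show (Φ.symm g) ∞ = g ∞
      exact hΦsymm_infty g
    show cY.symm (χ (cX ∞)) = ∞
    rw [key, cY.symm_apply_apply]
  exact ⟨myRestrict h1 hinfty⟩
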